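/- arXiv:2105.06573 — 2 statements merged into one kernel-verified Lean document; each statement's English description precedes it below -/
import Mathlib

section
/- Let v_1,...,v_n ∈ ℝ^{n-1} be the vertices of an (n−1)-simplex Δ and ℓ a linear functional with ∑_{i=1}^n ℓ(v_i) = 0. Then ∫_Δ ℓ(x)^3 dx = (2·Vol(Δ)/(n(n+1)(n+2)))·∑_{i=1}^n ℓ(v_i)^3. -/
open MeasureTheory


section BetaMoment
open intervalIntegral


lemma beta_int (b : ℕ) : ∀ (a : ℕ) (u : ℝ),
    ∫ x in (0:ℝ)..u, x ^ a * (u - x) ^ b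
      = u ^ (a + b + 1) * (a.factorial * b.factorial / (a + b + 1).factorial) := by
  induction b with
  | zero =>
    intro a u
    have h : ((a + 0 + 1).factorial : ℝ) = (a + 1) * a.factorial := by
      exact_mod_cast Nat.factorial_succ a
    simp only [pow_zero, mul_one, integral_pow, Nat.factorial_zero, Nat.cast_one, h]
    have ha : (a:ℝ) + 1 ≠ 0 := by positivity
    have ha' : (a.factorial : ℝ) ≠ 0 := by exact_mod_cast a.factorial_ne_zero
    field_simp
    ring
  | succ b ih =>
    intro a u
    have hU : ∀ x ∈ Set.uIcc (0:ℝ) u, HasDerivAt (fun x : ℝ => (u - x) ^ (b+1))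
        (-(((b:ℝ)+1) * (u - x) ^ b)) x := by
      intro x _
      have := ((hasDerivAt_id x).const_sub u).fun_pow (b+1)
      simpa using this.congr_deriv (by simp [id])
    have hV : ∀ x ∈ Set.uIcc (0:ℝ) u, HasDerivAt (fun x : ℝ => x ^ (a+1) / (a+1))
        (x ^ a) x := by
      intro x _
      have ha : (a:ℝ) + 1 ≠ 0 := by positivity
      have := (hasDerivAt_pow (a+1) x).div_const ((a:ℝ)+1)
      have hd : ((a:ℝ)+1) * x ^ (a + 1 - 1) / ((a:ℝ)+1) = x ^ a := by
        field_simp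
        simp
      rw [← hd]
      exact_mod_cast this
    have key := integral_mul_deriv_eq_deriv_mul hU hV
      (by apply Continuous.intervalIntegrable; continuity)
      (by apply Continuous.intervalIntegrable; continuity)
    -- key : ∫ (u-x)^(b+1) * x^a = ... - ∫ -(b+1)(u-x)^b * (x^(a+1)/(a+1))
    have e1 : ∫ x in (0:ℝ)..u, x ^ a * (u - x) ^ (b+1)
        = ∫ x in (0:ℝ)..u, (u - x) ^ (b+1) * x ^ a := by
      congr 1; ext x; ring
    rw [e1, key]
    have e2 : ∫ x in (0:ℝ)..u, -(((b:ℝ)+1) * (u - x) ^ b) * (x ^ (a+1) / (a+1))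
        = (-((b:ℝ)+1) / ((a:ℝ)+1)) * ∫ x in (0:ℝ)..u, x ^ (a+1) * (u - x) ^ b := by
      rw [← intervalIntegral.integral_const_mul]
      congr 1; ext x; ring
    rw [e2, ih (a+1) u]
    have ha : (a:ℝ) + 1 ≠ 0 := by positivity
    have h1 : ((a + (b+1) + 1).factorial : ℝ) ≠ 0 := by
      exact_mod_cast (a + (b+1) + 1).factorial_ne_zero
    have h2 : ((a + 1 + b + 1).factorial : ℝ)
        = (a + (b+1) + 1).factorial := by norm_num; ring_nf
    have h3 : ((b+1).factorial : ℝ) = (b+1) * b.factorial := by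
      exact_mod_cast Nat.factorial_succ b
    simp only [sub_self, ne_eq, zero_pow, sub_zero]
    rw [h2, h3]
    have harr : a + 1 + b + 1 = a + (b + 1) + 1 := by ring
    rw [harr]
    have h4 : ((a+1).factorial : ℝ) = ((a:ℝ)+1) * a.factorial := by
      exact_mod_cast Nat.factorial_succ a
    rw [h4]
    field_simp
    ring

def corner (d : ℕ) : Set (Fin d → ℝ) := {t | (∀ i, 0 ≤ t i) ∧ ∑ i, t i ≤ 1}

lemma isClosed_corner (d : ℕ) : IsClosed (corner d) := by
  have : corner d = (⋂ i, {t : Fin d → ℝ | 0 ≤ t i}) ∩ {t | ∑ i, t i ≤ 1} := by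
    ext t; simp [corner, Set.mem_iInter]
  rw [this]
  exact (isClosed_iInter fun i => isClosed_le continuous_const (continuous_apply i)).inter
    (isClosed_le (by continuity) continuous_const)

lemma isCompact_corner (d : ℕ) : IsCompact (corner d) := by
  refine IsCompact.of_isClosed_subset (isCompact_Icc (a := (0 : Fin d → ℝ)) (b := 1))
    (isClosed_corner d) ?_
  rintro t ⟨h0, h1⟩
  constructor
  · intro i; exact h0 i
  · intro i
    calc t i ≤ ∑ j, t j := Finset.single_le_sum (fun j _ => h0 j) (Finset.mem_univ i)
    _ ≤ 1 := h1

lemma measurableSet_corner (d : ℕ) : MeasurableSet (corner d) :=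
  (isClosed_corner d).measurableSet

lemma integrableOn_corner {d : ℕ} {f : (Fin d → ℝ) → ℝ} (hf : Continuous f) :
    IntegrableOn f (corner d) volume :=
  hf.continuousOn.integrableOn_compact (isCompact_corner d)

lemma snoc_mem_corner_iff {d : ℕ} {y : Fin d → ℝ} {x : ℝ} :
    Fin.snoc y x ∈ corner (d+1) ↔ y ∈ corner d ∧ 0 ≤ x ∧ x ≤ 1 - ∑ i, y i := by
  constructor
  · rintro ⟨h0, h1⟩
    rw [Fin.sum_univ_castSucc] at h1
    simp only [Fin.snoc_castSucc, Fin.snoc_last] at h1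
    have hy0 : ∀ i : Fin d, 0 ≤ y i := fun i => by simpa using h0 i.castSucc
    have hx0 : 0 ≤ x := by simpa using h0 (Fin.last d)
    exact ⟨⟨hy0, by linarith⟩, hx0, by linarith⟩
  · rintro ⟨⟨hy0, _⟩, hx0, hx1⟩
    constructor
    · intro i
      induction i using Fin.lastCases with
      | last => simpa using hx0
      | cast j => simpa using hy0 j
    · rw [Fin.sum_univ_castSucc]
      simp only [Fin.snoc_castSucc, Fin.snoc_last]
      linarith

lemma moment (d : ℕ) : ∀ (β : ℕ) (α : Fin d → ℕ),
    ∫ t in corner d, ((∏ i, t i ^ α i) * (1 - ∑ i, t i) ^ β)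
      = (∏ i, ((α i).factorial : ℝ)) * β.factorial / (d + ∑ i, α i + β).factorial := by
  induction d with
  | zero =>
    intro β α
    have h1 : corner 0 = Set.univ := by
      ext t; simp [corner]
    rw [h1]
    simp only [Finset.univ_eq_empty, Finset.prod_empty, Finset.sum_empty, sub_zero, one_pow,
      one_mul, Nat.cast_zero, zero_add, Measure.restrict_univ]
    rw [MeasureTheory.integral_const]
    have : (volume : Measure (Fin 0 → ℝ)) Set.univ = 1 := by
      rw [volume_pi, Measure.pi_univ]; simp
    rw [measureReal_def, this]
    simp only [ENNReal.toReal_one, one_smul]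
    rw [div_self (by exact_mod_cast β.factorial_ne_zero : ((β.factorial:ℝ) ≠ 0))]
  | succ d ih =>
    intro β α
    set a := α (Fin.last d) with ha
    set C : ℝ := a.factorial * β.factorial / (a + β + 1).factorial with hC
    have hcont : Continuous fun t : Fin (d+1) → ℝ => (∏ i, t i ^ α i) * (1 - ∑ i, t i) ^ β :=
      (continuous_finset_prod _ fun i _ => (continuous_apply i).pow _).mul
        ((continuous_const.sub (continuous_finset_sum _ fun i _ => continuous_apply i)).pow _)
    set f : (Fin (d+1) → ℝ) → ℝ :=
      (corner (d+1)).indicator (fun t => (∏ i, t i ^ α i) * (1 - ∑ i, t i) ^ β) with hf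
    have hfint : Integrable f volume :=
      (integrableOn_corner hcont).integrable_indicator (measurableSet_corner _)
    rw [← MeasureTheory.integral_indicator (measurableSet_corner _), ← hf]
    have hmp := (measurePreserving_piFinSuccAbove (fun _ : Fin (d+1) => (volume : Measure ℝ))
      (Fin.last d)).symm
    simp only [← volume_pi] at hmp
    rw [← hmp.integral_comp (MeasurableEquiv.measurableEmbedding _)]
    have hfint' : Integrable (fun p : ℝ × (Fin d → ℝ) =>
        f ((MeasurableEquiv.piFinSuccAbove (fun _ : Fin (d+1) => ℝ) (Fin.last d)).symm p))
        (volume.prod volume) :=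
      (hmp.integrable_comp_emb (MeasurableEquiv.measurableEmbedding _)).2 hfint
    rw [integral_prod_symm _ hfint']
    have key : ∀ y : Fin d → ℝ, (∫ x : ℝ,
        f ((MeasurableEquiv.piFinSuccAbove (fun _ : Fin (d+1) => ℝ) (Fin.last d)).symm (x, y)))
        = C * (corner d).indicator
            (fun y => (∏ i, y i ^ α (Fin.castSucc i)) * (1 - ∑ i, y i) ^ (a + β + 1)) y := by
      intro y
      have hsnoc : ∀ x : ℝ,
          (MeasurableEquiv.piFinSuccAbove (fun _ : Fin (d+1) => ℝ) (Fin.last d)).symm (x, y)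
            = Fin.snoc y x := by
        intro x
        simp [MeasurableEquiv.piFinSuccAbove_symm_apply, Fin.insertNth_last', Fin.snocEquiv]
      by_cases hy : y ∈ corner d
      · rw [Set.indicator_of_mem hy]
        set u : ℝ := 1 - ∑ i, y i with hu
        have hu0 : 0 ≤ u := by
          have := hy.2
          simp only [hu]; linarith
        have hptw : ∀ x : ℝ, f ((MeasurableEquiv.piFinSuccAbove
              (fun _ : Fin (d+1) => ℝ) (Fin.last d)).symm (x, y))
            = (Set.Icc (0:ℝ) u).indicator
                (fun x => (∏ i, y i ^ α (Fin.castSucc i)) * (x ^ a * (u - x) ^ β)) x := by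
          intro x
          rw [hsnoc x, hf]
          by_cases hx : x ∈ Set.Icc (0:ℝ) u
          · rw [Set.indicator_of_mem hx,
              Set.indicator_of_mem (snoc_mem_corner_iff.2 ⟨hy, hx.1, hx.2⟩)]
            rw [Fin.prod_univ_castSucc, Fin.sum_univ_castSucc]
            simp only [Fin.snoc_castSucc, Fin.snoc_last, ← ha]
            ring
          · rw [Set.indicator_of_notMem hx, Set.indicator_of_notMem]
            intro hmem
            rcases snoc_mem_corner_iff.1 hmem with ⟨_, hx0, hx1⟩
            exact hx ⟨hx0, hx1⟩
        rw [integral_congr_ae (Filter.Eventually.of_forall hptw)]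
        rw [MeasureTheory.integral_indicator measurableSet_Icc, integral_Icc_eq_integral_Ioc,
          ← intervalIntegral.integral_of_le hu0, intervalIntegral.integral_const_mul, beta_int]
        rw [hC]
        ring
      · rw [Set.indicator_of_notMem hy]
        have hz : ∀ x : ℝ, f ((MeasurableEquiv.piFinSuccAbove
            (fun _ : Fin (d+1) => ℝ) (Fin.last d)).symm (x, y)) = 0 := by
          intro x
          rw [hsnoc x, hf]
          apply Set.indicator_of_notMem
          intro hmem
          exact hy (snoc_mem_corner_iff.1 hmem).1
        rw [integral_congr_ae (Filter.Eventually.of_forall hz), integral_zero, mul_zero]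
    rw [integral_congr_ae (Filter.Eventually.of_forall key)]
    rw [MeasureTheory.integral_const_mul, MeasureTheory.integral_indicator (measurableSet_corner d)]
    rw [ih (a + β + 1) (fun i => α (Fin.castSucc i))]
    rw [Fin.prod_univ_castSucc (f := fun i => ((α i).factorial : ℝ)),
      Fin.sum_univ_castSucc (f := fun i => α i)]
    have harr : d + ∑ i : Fin d, α (Fin.castSucc i) + (a + β + 1)
        = (d + 1) + (∑ i : Fin d, α (Fin.castSucc i) + a) + β := by ring
    rw [harr, hC]
    have h1 : ((a + β + 1).factorial : ℝ) ≠ 0 := by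
      exact_mod_cast (a + β + 1).factorial_ne_zero
    have h2 : (((d + 1) + (∑ i : Fin d, α (Fin.castSucc i) + a) + β).factorial : ℝ) ≠ 0 := by
      exact_mod_cast Nat.factorial_ne_zero _
    push_cast
    field_simp
    ring

end BetaMoment


noncomputable def lam {d : ℕ} : Fin (d+1) → (Fin d → ℝ) → ℝ :=
  Fin.snoc (fun i t => t i) (fun t => 1 - ∑ i, t i)

lemma lam_castSucc {d : ℕ} (i : Fin d) : lam (Fin.castSucc i) = fun t => t i := by
  simp [lam]

lemma lam_last {d : ℕ} : lam (Fin.last d) = fun t => 1 - ∑ i, t i := by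
  simp [lam]

lemma lam_continuous {d : ℕ} (m : Fin (d+1)) : Continuous (lam m) := by
  induction m using Fin.lastCases with
  | last =>
    rw [lam_last]
    exact continuous_const.sub (continuous_finset_sum _ fun i _ => continuous_apply i)
  | cast i =>
    rw [lam_castSucc]
    exact continuous_apply i

/-- The counting factor. -/
noncomputable def NN {m : ℕ} (i j k : Fin m) : ℝ :=
  1 + (if i = j then 1 else 0) + (if i = k then 1 else 0) + (if j = k then 1 else 0)
    + (if i = j then 1 else 0) * (if j = k then 1 else 0) * 2

lemma moment3 {d : ℕ} (i j k : Fin (d+1)) :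
    ∫ t in corner d, lam i t * lam j t * lam k t = NN i j k / (d + 3).factorial := by
  classical
  set γ : Fin (d+1) → ℕ := fun m =>
    (if m = i then 1 else 0) + (if m = j then 1 else 0) + (if m = k then 1 else 0) with hγ
  have hsum : ∑ m, γ m = 3 := by
    simp [hγ, Finset.sum_add_distrib, Finset.sum_ite_eq']
  have hproto : ∀ g : (Fin d → ℝ) → ℝ, ∀ (δ : Fin (d+1) → ℕ) (t : Fin d → ℝ),
      ∏ m, lam m t ^ δ m
        = (∏ m : Fin d, t m ^ δ (Fin.castSucc m)) * (1 - ∑ m, t m) ^ δ (Fin.last d) := by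
    intro g δ t
    rw [Fin.prod_univ_castSucc]
    congr 1
    · exact Finset.prod_congr rfl fun m _ => by rw [lam_castSucc]
    · rw [lam_last]
  have hexp : ∀ t : Fin d → ℝ, lam i t * lam j t * lam k t = ∏ m, lam m t ^ γ m := by
    intro t
    have hone : ∀ (l : Fin (d+1)), ∏ m, lam m t ^ (if m = l then 1 else 0) = lam l t := by
      intro l
      have : ∀ m : Fin (d+1), lam m t ^ (if m = l then 1 else 0)
          = (if m = l then lam l t else 1) := by
        intro m
        by_cases h : m = l <;> simp [h]
      rw [Finset.prod_congr rfl fun m _ => this m, Finset.prod_ite_eq']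
      simp
    calc lam i t * lam j t * lam k t
        = (∏ m, lam m t ^ (if m = i then 1 else 0)) * (∏ m, lam m t ^ (if m = j then 1 else 0))
            * (∏ m, lam m t ^ (if m = k then 1 else 0)) := by rw [hone, hone, hone]
      _ = ∏ m, lam m t ^ γ m := by
          rw [← Finset.prod_mul_distrib, ← Finset.prod_mul_distrib]
          exact Finset.prod_congr rfl fun m _ => by rw [hγ]; rw [pow_add, pow_add]
  have hNN : (∏ m, ((γ m).factorial : ℝ)) = NN i j k := by
    by_cases hij : i = j
    · by_cases hjk : j = k
      · subst hij; subst hjk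
        have hγ' : ∀ m, ((γ m).factorial : ℝ) = if m = i then 6 else 1 := by
          intro m; by_cases hm : m = i <;> norm_num [hγ, hm, Nat.factorial]
        rw [Finset.prod_congr rfl fun m _ => hγ' m, Finset.prod_ite_eq']
        norm_num [NN]
      · subst hij
        have hki : ¬ k = i := fun h => hjk h.symm
        have hγ' : ∀ m, ((γ m).factorial : ℝ) = if m = i then 2 else 1 := by
          intro m
          by_cases hm : m = i
          · norm_num [hγ, hm, hjk, Nat.factorial]
          · by_cases hmk : m = k <;> norm_num [hγ, hm, hmk, hki]
        rw [Finset.prod_congr rfl fun m _ => hγ' m, Finset.prod_ite_eq']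
        norm_num [NN, hjk]
    · by_cases hik : i = k
      · subst hik
        have hji : ¬ j = i := fun h => hij h.symm
        have hγ' : ∀ m, ((γ m).factorial : ℝ) = if m = i then 2 else 1 := by
          intro m
          by_cases hm : m = i
          · norm_num [hγ, hm, hij, Nat.factorial]
          · by_cases hmj : m = j <;> norm_num [hγ, hm, hmj, hji]
        rw [Finset.prod_congr rfl fun m _ => hγ' m, Finset.prod_ite_eq']
        norm_num [NN, hij, hji]
      · by_cases hjk : j = k
        · have hji : ¬ j = i := fun h => hij h.symm
          have hγ' : ∀ m, ((γ m).factorial : ℝ) = if m = j then 2 else 1 := by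
            intro m
            by_cases hm : m = j
            · have hki : ¬ k = i := fun h => hik h.symm
              norm_num [hγ, hm, hji, hjk, hki, Nat.factorial]
            · by_cases hmi : m = i
              · norm_num [hγ, hm, hmi, hij, hik]
              · have hmk : ¬ m = k := fun h => hm (h.trans hjk.symm)
                norm_num [hγ, hm, hmi, hmk]
          rw [Finset.prod_congr rfl fun m _ => hγ' m, Finset.prod_ite_eq']
          norm_num [NN, hij, hik, hjk]
        · have hki : ¬ k = i := fun h => hik h.symm
          have hkj : ¬ k = j := fun h => hjk h.symm
          have hji : ¬ j = i := fun h => hij h.symm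
          have hγ' : ∀ m, ((γ m).factorial : ℝ) = 1 := by
            intro m
            by_cases hm : m = i
            · norm_num [hγ, hm, hij, hik]
            · by_cases hmj : m = j
              · norm_num [hγ, hm, hmj, hji, hjk]
              · by_cases hmk : m = k <;> norm_num [hγ, hm, hmj, hmk, hki, hkj]
          rw [Finset.prod_congr rfl fun m _ => hγ' m]
          norm_num [NN, hij, hik, hjk]
  calc ∫ t in corner d, lam i t * lam j t * lam k t
      = ∫ t in corner d,
          ((∏ m : Fin d, t m ^ γ (Fin.castSucc m)) * (1 - ∑ m, t m) ^ γ (Fin.last d)) := by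
        refine integral_congr_ae (Filter.Eventually.of_forall fun t => ?_)
        show lam i t * lam j t * lam k t = _
        rw [hexp t, hproto (fun _ => 0) γ t]
    _ = (∏ m : Fin d, ((γ (Fin.castSucc m)).factorial : ℝ)) * (γ (Fin.last d)).factorial
          / (d + ∑ m : Fin d, γ (Fin.castSucc m) + γ (Fin.last d)).factorial := moment d _ _
    _ = NN i j k / (d + 3).factorial := by
        rw [← hNN, Fin.prod_univ_castSucc (f := fun m => ((γ m).factorial : ℝ))]
        congr 2
        have : d + ∑ m : Fin d, γ (Fin.castSucc m) + γ (Fin.last d)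
            = d + ∑ m, γ m := by
          rw [Fin.sum_univ_castSucc (f := γ)]; ring
        rw [this, hsum]

lemma cube_integral (d : ℕ) (B : Fin (d+1) → ℝ) (hB : ∑ m, B m = 0) :
    ∫ t in corner d, (∑ m, B m * lam m t) ^ 3
      = 2 * (∑ m, B m ^ 3) / (d + 3).factorial := by
  classical
  have expand : ∀ t : Fin d → ℝ, (∑ m, B m * lam m t)^3
      = ∑ i, ∑ j, ∑ k, (B i * B j * B k) * (lam i t * lam j t * lam k t) := by
    intro t
    have h3 : (∑ m, B m * lam m t)^3
        = (∑ m, B m * lam m t) * ((∑ m, B m * lam m t) * (∑ m, B m * lam m t)) := by ring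
    rw [h3]
    simp only [Finset.mul_sum, Finset.sum_mul]
    refine Finset.sum_congr rfl fun i _ => ?_
    refine Finset.sum_congr rfl fun j _ => ?_
    refine Finset.sum_congr rfl fun k _ => ?_
    ring
  have hint : ∀ i j k : Fin (d+1), IntegrableOn
      (fun t => (B i * B j * B k) * (lam i t * lam j t * lam k t)) (corner d) volume :=
    fun i j k => integrableOn_corner (continuous_const.mul
      (((lam_continuous i).mul (lam_continuous j)).mul (lam_continuous k)))
  have tri : ∑ i, ∑ j, ∑ k, (B i * B j * B k) * NN i j k = 2 * ∑ m, B m ^ 3 := by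
    have inner2 : ∀ i j : Fin (d+1), ∑ k, (B i * B j * B k) * NN i j k
        = B i^2 * B j + B i * B j^2 + (if i = j then 1 else 0) * (2 * B i * B j ^2) := by
      intro i j
      by_cases hij : i = j
      · subst hij
        have : ∀ k, (B i * B i * B k) * NN i i k
            = 2 * (B i * B i) * B k + (if i = k then 4 * B i * B i * B k else 0) := by
          intro k
          by_cases hik : i = k <;> simp [NN, hik] <;> ring
        rw [Finset.sum_congr rfl fun k _ => this k, Finset.sum_add_distrib,
          ← Finset.mul_sum, hB, Finset.sum_ite_eq]
        simp; ring
      · have : ∀ k, (B i * B j * B k) * NN i j k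
            = B i * B j * B k + ((if i = k then B i * B j * B k else 0)
              + (if j = k then B i * B j * B k else 0)) := by
          intro k
          by_cases hik : i = k
          · by_cases hjk : j = k
            · exact absurd (hik.trans hjk.symm) hij
            · have hkj : ¬ k = j := fun h => hij (hik.trans h)
              simp [NN, hij, hik, hjk, hkj]
              ring
          · by_cases hjk : j = k
            · have hki : ¬ k = i := fun h => hik h.symm
              simp [NN, hij, hik, hjk, hki]
              ring
            · simp [NN, hij, hik, hjk]
        rw [Finset.sum_congr rfl fun k _ => this k, Finset.sum_add_distrib,
          Finset.sum_add_distrib, ← Finset.mul_sum, hB, Finset.sum_ite_eq, Finset.sum_ite_eq]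
        simp [hij]; ring
    rw [Finset.sum_congr rfl fun i _ => Finset.sum_congr rfl fun j _ => inner2 i j]
    have inner1 : ∀ i : Fin (d+1), ∑ j, (B i^2 * B j + B i * B j^2
        + (if i = j then 1 else 0) * (2 * B i * B j ^2))
        = B i * (∑ m, B m^2) + 2 * B i^3 := by
      intro i
      rw [Finset.sum_add_distrib, Finset.sum_add_distrib, ← Finset.mul_sum, hB,
        ← Finset.mul_sum]
      have : ∀ j, (if i = j then 1 else 0) * (2 * B i * B j ^2)
          = (if i = j then 2 * B i * B j ^2 else 0) := by
        intro j; by_cases h : i = j <;> simp [h]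
      rw [Finset.sum_congr rfl fun j _ => this j, Finset.sum_ite_eq]
      simp; ring
    rw [Finset.sum_congr rfl fun i _ => inner1 i, Finset.sum_add_distrib, ← Finset.sum_mul,
      hB]
    rw [← Finset.mul_sum]
    ring
  calc ∫ t in corner d, (∑ m, B m * lam m t)^3
      = ∫ t in corner d, ∑ i, ∑ j, ∑ k, (B i * B j * B k) * (lam i t * lam j t * lam k t) :=
        setIntegral_congr_fun (measurableSet_corner d) (fun t _ => expand t)
    _ = ∑ i, ∑ j, ∑ k, ∫ t in corner d, (B i * B j * B k) * (lam i t * lam j t * lam k t) := by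
        rw [integral_finset_sum _ (fun i _ => integrable_finset_sum _
          (fun j _ => integrable_finset_sum _ (fun k _ => hint i j k)))]
        refine Finset.sum_congr rfl fun i _ => ?_
        rw [integral_finset_sum _ (fun j _ => integrable_finset_sum _ (fun k _ => hint i j k))]
        refine Finset.sum_congr rfl fun j _ => ?_
        rw [integral_finset_sum _ (fun k _ => hint i j k)]
    _ = ∑ i, ∑ j, ∑ k, (B i * B j * B k) * (NN i j k / (d + 3).factorial) := by
        refine Finset.sum_congr rfl fun i _ => Finset.sum_congr rfl fun j _ =>
          Finset.sum_congr rfl fun k _ => ?_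
        rw [MeasureTheory.integral_const_mul, moment3]
    _ = (∑ i, ∑ j, ∑ k, (B i * B j * B k) * NN i j k) / (d + 3).factorial := by
        simp only [← mul_div_assoc, ← Finset.sum_div]
    _ = 2 * (∑ m, B m ^ 3) / (d + 3).factorial := by rw [tri]

section GeoSec
open Pointwise


noncomputable def Lmap {d : ℕ} (u : Fin d → (Fin d → ℝ)) : (Fin d → ℝ) →ₗ[ℝ] (Fin d → ℝ) where
  toFun t := ∑ i, t i • u i
  map_add' x y := by simp [add_smul, Finset.sum_add_distrib]
  map_smul' c x := by simp [mul_smul, Finset.smul_sum]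

noncomputable def pts (d : ℕ) : Fin (d+1) → (Fin d → ℝ) :=
  Fin.snoc (fun i => Pi.single i 1) 0

lemma sum_smul_single {d : ℕ} (t : Fin d → ℝ) : ∑ j, t j • (Pi.single j 1 : Fin d → ℝ) = t := by
  funext x
  rw [Finset.sum_apply]
  simp [Pi.single_apply, Finset.sum_ite_eq]

lemma convex_corner (d : ℕ) : Convex ℝ (corner d) := by
  intro x hx y hy a b ha hb hab
  constructor
  · intro i
    have := hx.1 i; have := hy.1 i
    simp only [Pi.add_apply, Pi.smul_apply, smul_eq_mul]
    positivity
  · simp only [Pi.add_apply, Pi.smul_apply, smul_eq_mul]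
    rw [Finset.sum_add_distrib, ← Finset.mul_sum, ← Finset.mul_sum]
    nlinarith [hx.2, hy.2]

lemma corner_eq_hull (d : ℕ) : corner d = convexHull ℝ (Set.range (pts d)) := by
  apply Set.Subset.antisymm
  · intro t ht
    set W : Fin (d+1) → ℝ := Fin.snoc t (1 - ∑ i, t i) with hW
    have hW0 : ∀ i ∈ Finset.univ, 0 ≤ W i := by
      intro i _
      induction i using Fin.lastCases with
      | last => simp only [hW, Fin.snoc_last]; linarith [ht.2]
      | cast j => simpa [hW] using ht.1 j
    have hW1 : ∑ i, W i = 1 := by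
      rw [Fin.sum_univ_castSucc]
      simp [hW]
    have hmem := Finset.centerMass_mem_convexHull Finset.univ hW0 (by rw [hW1]; norm_num)
      (fun i _ => Set.mem_range_self (f := pts d) i)
    rw [Finset.centerMass_eq_of_sum_1 _ _ hW1] at hmem
    have heq : ∑ i, W i • pts d i = t := by
      rw [Fin.sum_univ_castSucc]
      simp only [hW, pts, Fin.snoc_castSucc, Fin.snoc_last, smul_zero, add_zero]
      exact sum_smul_single t
    rwa [heq] at hmem
  · refine convexHull_min ?_ (convex_corner d)
    rintro _ ⟨i, rfl⟩
    induction i using Fin.lastCases with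
    | last =>
      refine ⟨fun i => ?_, ?_⟩ <;> simp [pts]
    | cast j =>
      constructor
      · intro i
        simp [pts, Pi.single_apply]
        positivity
      · simp [pts, Pi.single_apply, Finset.sum_ite_eq]

theorem pi_side (d : ℕ) (w : Fin (d+1) → (Fin d → ℝ)) (hw : AffineIndependent ℝ w)
    (ℓ : (Fin d → ℝ) →ₗ[ℝ] ℝ) (h0 : ∑ i, ℓ (w i) = 0) :
    (∫ x in convexHull ℝ (Set.range w), (ℓ x) ^ 3)
      = (2 * (volume (convexHull ℝ (Set.range w))).toReal / ((d+1) * (d+2) * (d+3)))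
          * ∑ i, (ℓ (w i)) ^ 3 := by
  classical
  set c := w (Fin.last d) with hc
  set u : Fin d → (Fin d → ℝ) := fun j => w (Fin.castSucc j) - c with hu
  set L := Lmap u with hL
  -- linear independence of u
  have hli : LinearIndependent ℝ u := by
    have h := (affineIndependent_iff_linearIndependent_vsub ℝ w (Fin.last d)).1 hw
    have hinj : Function.Injective (fun j : Fin d =>
        (⟨Fin.castSucc j, (Fin.castSucc_lt_last j).ne⟩ : {x : Fin (d+1) // x ≠ Fin.last d})) := by
      intro a b hab
      exact Fin.castSucc_injective d (congrArg Subtype.val hab)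
    exact (h.comp _ hinj : _)
  have hLinj : Function.Injective L := by
    refine LinearMap.ker_eq_bot.1 (LinearMap.ker_eq_bot'.2 fun t ht => ?_)
    have := linearIndependent_iff'.1 hli Finset.univ t (by exact ht) 
    funext i
    exact this i (Finset.mem_univ i)
  -- affine map
  set Amap : (Fin d → ℝ) →ᵃ[ℝ] (Fin d → ℝ) :=
    { toFun := fun t => c + L t
      linear := L
      map_vadd' := by
        intro p v
        simp only [vadd_eq_add, map_add]
        abel } with hA
  have hApts : ∀ i, Amap (pts d i) = w i := by
    intro i
    induction i using Fin.lastCases with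
    | last =>
      show c + L (pts d (Fin.last d)) = w (Fin.last d)
      simp [pts, hc]
    | cast j =>
      show c + L (pts d (Fin.castSucc j)) = w (Fin.castSucc j)
      have hps : pts d (Fin.castSucc j) = Pi.single j 1 := by simp [pts]
      have hLs : L (Pi.single j 1) = u j := by
        show ∑ i, (Pi.single j 1 : Fin d → ℝ) i • u i = u j
        rw [Finset.sum_eq_single j]
        · simp
        · intro i _ hij
          rw [Pi.single_eq_of_ne hij, zero_smul]
        · intro h; exact absurd (Finset.mem_univ j) h
      rw [hps, hLs]
      show c + (w (Fin.castSucc j) - c) = w (Fin.castSucc j)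
      abel
  have hhull : convexHull ℝ (Set.range w) = Amap '' (corner d) := by
    rw [corner_eq_hull, AffineMap.image_convexHull, ← Set.range_comp,
      show (⇑Amap ∘ pts d) = w from funext hApts]
  -- volume
  have himg : Amap '' corner d = c +ᵥ (⇑L '' corner d) := by
    ext x
    constructor
    · rintro ⟨t, ht, rfl⟩
      exact ⟨L t, ⟨t, ht, rfl⟩, rfl⟩
    · rintro ⟨y, ⟨t, ht, rfl⟩, rfl⟩
      exact ⟨t, ht, rfl⟩
  have hvol : volume (convexHull ℝ (Set.range w))
      = ENNReal.ofReal |LinearMap.det L| * volume (corner d) := by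
    rw [hhull, himg, measure_vadd, Measure.addHaar_image_linearMap]
  have hfin : volume (corner d) ≠ ⊤ := (isCompact_corner d).measure_lt_top.ne
  have hvc : (volume (corner d)).toReal = (d.factorial : ℝ)⁻¹ := by
    have h := moment d 0 (fun _ => 0)
    have h2 : ∫ t in corner d, ((∏ i : Fin d, t i ^ (0:ℕ)) * (1 - ∑ i, t i) ^ (0:ℕ))
        = ∫ t in corner d, (1:ℝ) :=
      setIntegral_congr_fun (measurableSet_corner d) (fun t _ => by simp)
    rw [h2] at h
    rw [setIntegral_const] at h
    simpa [measureReal_def] using h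
  -- change of variables
  set L' := LinearMap.toContinuousLinearMap L with hL'
  have hcoe : ∀ t, L t = L' t := fun t => by simp [hL']
  have hAinj : Set.InjOn (fun t => c + L' t) (corner d) := fun a _ b _ h =>
    hLinj (by rw [hcoe a, hcoe b]; simpa using h)
  have hJ := integral_image_eq_integral_abs_det_fderiv_smul volume (measurableSet_corner d)
      (fun (x : Fin d → ℝ) (_ : x ∈ corner d) =>
        ((L'.hasFDerivAt).const_add c).hasFDerivWithinAt)
      hAinj (fun x => (ℓ x)^3)
  have hAco : ⇑Amap '' corner d = (fun t => c + L' t) '' corner d := by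
    have h : ⇑Amap = fun t => c + L' t := by
      funext t
      show c + L t = c + L' t
      rw [hcoe]
    rw [h]
  set B : Fin (d+1) → ℝ := fun m => ℓ (w m) with hBdef
  have hptB : ∀ t : Fin d → ℝ, ℓ (c + L' t) = ∑ m, B m * lam m t := by
    intro t
    rw [← hcoe, map_add]
    have h1 : ℓ (L t) = ∑ i, t i * ℓ (u i) := by
      rw [hL]
      show ℓ (∑ i, t i • u i) = _
      rw [map_sum]
      simp [smul_eq_mul]
    rw [h1]
    rw [Fin.sum_univ_castSucc (f := fun m => B m * lam m t)]
    simp only [hBdef, lam_castSucc, lam_last, hu, map_sub]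
    simp only [mul_sub, Finset.sum_sub_distrib, ← Finset.sum_mul]
    rw [show ∑ x, t x * ℓ (w (Fin.castSucc x)) = ∑ x, ℓ (w (Fin.castSucc x)) * t x from
      Finset.sum_congr rfl fun x _ => mul_comm _ _]
    ring
  have hdet : ContinuousLinearMap.det L' = LinearMap.det L := by
    rw [hL']
    rfl
  have hcube : ∫ t in corner d, (ℓ (c + L' t))^3 = 2 * (∑ i, (ℓ (w i))^3) / (d + 3).factorial := by
    have := cube_integral d B h0
    rw [← this]
    exact setIntegral_congr_fun (measurableSet_corner d) (fun t _ => by rw [hptB t])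
  rw [hhull, hAco, hJ]
  have hsmul : ∫ t in corner d, |ContinuousLinearMap.det L'| • (ℓ (c + L' t))^3
      = |LinearMap.det L| * (2 * (∑ i, (ℓ (w i))^3) / (d + 3).factorial) := by
    rw [MeasureTheory.integral_smul, hdet, hcube]
    simp
  rw [hsmul, ← hAco, ← hhull, hvol, ENNReal.toReal_mul, ENNReal.toReal_ofReal (abs_nonneg _), hvc]
  have e1 : d + 3 = (d + 2) + 1 := by omega
  have e2 : d + 2 = (d + 1) + 1 := by omega
  have hfact : ((d+3).factorial : ℝ) = (d.factorial : ℝ) * ((d+1) * (d+2) * (d+3)) := by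
    rw [e1, Nat.factorial_succ, e2, Nat.factorial_succ, Nat.factorial_succ]
    push_cast
    ring
  rw [hfact]
  have hd0 : (d.factorial : ℝ) ≠ 0 := by exact_mod_cast d.factorial_ne_zero
  have hp : ((d:ℝ)+1) * ((d:ℝ)+2) * ((d:ℝ)+3) ≠ 0 := by positivity
  field_simp

end GeoSec


theorem euclid_side (d : ℕ) (v : Fin (d+1) → EuclideanSpace ℝ (Fin d))
    (hv : AffineIndependent ℝ v)
    (ℓ : EuclideanSpace ℝ (Fin d) →ₗ[ℝ] ℝ) (h0 : ∑ i, ℓ (v i) = 0) :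
    (∫ x in convexHull ℝ (Set.range v), (ℓ x) ^ 3)
      = (2 * (volume (convexHull ℝ (Set.range v))).toReal
          / (((d:ℝ)+1) * ((d:ℝ)+2) * ((d:ℝ)+3)))
          * ∑ i, (ℓ (v i)) ^ 3 := by
  classical
  set lin := WithLp.linearEquiv 2 ℝ (Fin d → ℝ) with hlin
  set φ := (MeasurableEquiv.toLp 2 (Fin d → ℝ)).symm with hφ
  have hφlin : (⇑φ : EuclideanSpace ℝ (Fin d) → (Fin d → ℝ)) = ⇑lin := rfl
  set w : Fin (d+1) → (Fin d → ℝ) := fun i => lin (v i) with hwdef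
  have hw : AffineIndependent ℝ w := by
    have := hv.map' (lin.toLinearMap.toAffineMap) (by
      intro a b hab
      exact lin.injective hab)
    exact this
  set ℓ' : (Fin d → ℝ) →ₗ[ℝ] ℝ := ℓ.comp (lin.symm.toLinearMap) with hℓ'
  have hℓw : ∀ i, ℓ' (w i) = ℓ (v i) := by
    intro i
    simp [hℓ', hwdef]
  have h0' : ∑ i, ℓ' (w i) = 0 := by
    rw [Finset.sum_congr rfl fun i _ => hℓw i]
    exact h0
  have hhull : ⇑lin '' (convexHull ℝ (Set.range v)) = convexHull ℝ (Set.range w) := by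
    rw [show (⇑lin : EuclideanSpace ℝ (Fin d) → (Fin d → ℝ)) = ⇑lin.toLinearMap from rfl,
      lin.toLinearMap.image_convexHull]
    congr 1
    rw [← Set.range_comp]
    rfl
  have hwmeas : MeasurableSet (convexHull ℝ (Set.range w)) :=
    ((Set.finite_range w).isCompact_convexHull (𝕜 := ℝ)).isClosed.measurableSet
  have hpre : ⇑φ ⁻¹' (convexHull ℝ (Set.range w)) = convexHull ℝ (Set.range v) := by
    rw [hφlin, ← hhull, Set.preimage_image_eq _ lin.injective]
  have hvol : volume (convexHull ℝ (Set.range v)) = volume (convexHull ℝ (Set.range w)) := by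
    rw [← hpre]
    exact (EuclideanSpace.volume_preserving_symm_measurableEquiv_toLp (Fin d)).measure_preimage
      hwmeas.nullMeasurableSet
  have hint := (EuclideanSpace.volume_preserving_symm_measurableEquiv_toLp (Fin d)).setIntegral_preimage_emb
    (φ.measurableEmbedding) (fun y => (ℓ' y)^3) (convexHull ℝ (Set.range w))
  rw [hpre] at hint
  have hptw : ∀ x : EuclideanSpace ℝ (Fin d), ℓ' (φ x) = ℓ x := by
    intro x
    rw [hφlin]
    simp [hℓ']
  have hvmeas : MeasurableSet (convexHull ℝ (Set.range v)) :=
    ((Set.finite_range v).isCompact_convexHull (𝕜 := ℝ)).isClosed.measurableSet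
  have hLHS : (∫ x in convexHull ℝ (Set.range v), (ℓ x) ^ 3)
      = ∫ y in convexHull ℝ (Set.range w), (ℓ' y)^3 := by
    rw [← hint]
    exact setIntegral_congr_fun hvmeas (fun x _ => by rw [hptw x])
  rw [hLHS, pi_side d w hw ℓ' h0', ← hvol,
    show ∑ i, (ℓ' (w i))^3 = ∑ i, (ℓ (v i))^3 from
      Finset.sum_congr rfl fun i _ => by rw [hℓw i]]

theorem integral_linear_cube_over_simplex (n : ℕ) (hn : 1 ≤ n)
    (v : Fin n → EuclideanSpace ℝ (Fin (n - 1))) (hv : AffineIndependent ℝ v)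
    (ℓ : EuclideanSpace ℝ (Fin (n - 1)) →ₗ[ℝ] ℝ) (h0 : ∑ i, ℓ (v i) = 0) :
    (∫ x in convexHull ℝ (Set.range v), (ℓ x) ^ 3)
      = (2 * (volume (convexHull ℝ (Set.range v))).toReal / (n * (n + 1) * (n + 2)))
          * ∑ i, (ℓ (v i)) ^ 3 := by
  obtain ⟨d, rfl⟩ : ∃ d, n = d + 1 := ⟨n - 1, (Nat.succ_pred_eq_of_pos hn).symm⟩
  have h := euclid_side d v hv ℓ h0
  rw [show (((d+1 : ℕ):ℝ) * (((d+1:ℕ):ℝ) + 1) * (((d+1:ℕ):ℝ) + 2))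
      = ((d:ℝ)+1) * ((d:ℝ)+2) * ((d:ℝ)+3) from by push_cast; ring]
  exact h
end

section
/- Let v_1,...,v_n ∈ ℝ^{n-1} be the vertices of an (n−1)-simplex Δ and ℓ a linear functional with ∑_{i=1}^n ℓ(v_i) = 0. Then ∫_Δ ℓ(x)^4 dx = (Vol(Δ)/(n(n+1)(n+2)(n+3)))·(6∑_{i=1}^n ℓ(v_i)^4 + 3(∑_{i=1}^n ℓ(v_i)^2)^2). -/
open MeasureTheory Finset Pointwise

/-- The closed standard simplex region in `Fin d → ℝ`. -/
def Tset (d : ℕ) : Set (Fin d → ℝ) := {x | (∀ i, 0 ≤ x i) ∧ ∑ i, x i ≤ 1}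

lemma Tset_isClosed (d : ℕ) : IsClosed (Tset d) := by
  have h1 : IsClosed {x : Fin d → ℝ | ∀ i, 0 ≤ x i} := by
    have : {x : Fin d → ℝ | ∀ i, 0 ≤ x i} = ⋂ i, {x | 0 ≤ x i} := by ext x; simp
    rw [this]
    exact isClosed_iInter fun i => isClosed_le continuous_const (continuous_apply i)
  have h2 : IsClosed {x : Fin d → ℝ | ∑ i, x i ≤ 1} :=
    isClosed_le (by continuity) continuous_const
  exact h1.inter h2

lemma Tset_subset_box (d : ℕ) : Tset d ⊆ Set.univ.pi fun _ : Fin d => Set.Icc (0:ℝ) 1 := by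
  intro x hx i _
  refine ⟨hx.1 i, ?_⟩
  calc x i ≤ ∑ j, x j := Finset.single_le_sum (fun j _ => hx.1 j) (mem_univ i)
  _ ≤ 1 := hx.2

lemma Tset_isCompact (d : ℕ) : IsCompact (Tset d) :=
  (isCompact_univ_pi fun _ => isCompact_Icc).of_isClosed_subset (Tset_isClosed d)
    (Tset_subset_box d)

lemma Tset_measurable (d : ℕ) : MeasurableSet (Tset d) := (Tset_isClosed d).measurableSet

/-- Beta integral for natural exponents. -/
lemma beta_nat (j m : ℕ) :
    ∫ t in (0:ℝ)..1, t ^ j * (1 - t) ^ m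
      = (Nat.factorial j * Nat.factorial m : ℝ) / Nat.factorial (j + m + 1) := by
  induction m generalizing j with
  | zero =>
      simp only [pow_zero, mul_one, integral_pow]
      have : (↑j + 1 : ℝ) ≠ 0 := by positivity
      rw [Nat.factorial_succ]
      push_cast
      field_simp
      simp
  | succ m ih =>
      have hu : ∀ x ∈ Set.uIcc (0:ℝ) 1, HasDerivAt (fun t : ℝ => (1-t)^(m+1))
          (-( (m+1) * (1-x)^m)) x := by
        intro x _
        have h1 : HasDerivAt (fun t : ℝ => 1 - t) (-1) x := by
          simpa using (hasDerivAt_id x).const_sub 1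
        have := h1.fun_pow (m+1)
        simpa [mul_comm, mul_assoc, mul_left_comm] using this
      have hv : ∀ x ∈ Set.uIcc (0:ℝ) 1, HasDerivAt (fun t : ℝ => t^(j+1)/(j+1))
          (x ^ j) x := by
        intro x _
        have := (hasDerivAt_pow (j+1) x).div_const ((j:ℝ)+1)
        have hj : ((j:ℝ)+1) ≠ 0 := by positivity
        refine this.congr_deriv ?_
        push_cast
        field_simp
      have hpart := intervalIntegral.integral_mul_deriv_eq_deriv_mul hu hv
        (by apply Continuous.intervalIntegrable; continuity)
        (by apply Continuous.intervalIntegrable; continuity)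
      -- hpart : ∫ (1-t)^(m+1) * t^j = ... - ∫ (-(m+1)(1-t)^m) * (t^(j+1)/(j+1))
      have e1 : (∫ t in (0:ℝ)..1, t ^ j * (1-t)^(m+1))
          = ∫ t in (0:ℝ)..1, (1-t)^(m+1) * t ^ j := by
        congr 1; ext t; ring
      rw [e1, hpart]
      have e2 : (∫ t in (0:ℝ)..1, -((m+1) * (1-t)^m) * (t^(j+1)/(j+1)))
          = -(((m:ℝ)+1)/((j:ℝ)+1)) * ∫ t in (0:ℝ)..1, t^(j+1) * (1-t)^m := by
        rw [← intervalIntegral.integral_const_mul]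
        congr 1; ext t; ring
      rw [e2, ih (j+1)]
      have hfj : (Nat.factorial (j+1) : ℝ) = (j+1) * Nat.factorial j := by
        push_cast [Nat.factorial_succ]; ring
      have hfm : (Nat.factorial (m+1) : ℝ) = (m+1) * Nat.factorial m := by
        push_cast [Nat.factorial_succ]; ring
      have hidx : j + 1 + m + 1 = j + (m+1) + 1 := by ring
      rw [hidx] at *
      have hfz : (Nat.factorial (j + (m+1) + 1) : ℝ) ≠ 0 := by positivity
      have hj : ((j:ℝ)+1) ≠ 0 := by positivity
      rw [hfj, hfm]
      field_simp
      ring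

lemma zero_mem_Tset (d : ℕ) : (0 : Fin d → ℝ) ∈ Tset d := by
  constructor
  · intro i; simp
  · simp

lemma continuous_snocc (d : ℕ) : Continuous (fun p : ℝ × (Fin d → ℝ) => (Fin.snoc p.2 p.1 : Fin (d+1) → ℝ)) := by
  refine continuous_pi fun i => ?_
  induction i using Fin.lastCases with
  | last => simpa [Fin.snoc_last] using continuous_fst
  | cast i => simpa [Fin.snoc_castSucc, Function.comp_def] using (continuous_apply i).comp (continuous_snd (X := ℝ))

lemma continuous_snoc_right (d : ℕ) (t : ℝ) :
    Continuous (fun y : Fin d → ℝ => (Fin.snoc y t : Fin (d+1) → ℝ)) := by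
  have := (continuous_snocc d).comp (Continuous.prodMk_right t)
  exact this

/-- scaling of set integral over the scaled simplex. -/
lemma scale_integral (d : ℕ) {c : ℝ} (hc : 0 ≤ c) (g : (Fin d → ℝ) → ℝ) :
    ∫ y in c • Tset d, g y = c ^ d * ∫ z in Tset d, g (c • z) := by
  rcases eq_or_lt_of_le hc with hc0 | hcpos
  · -- c = 0
    rcases hc0 with rfl
    rcases Nat.eq_zero_or_pos d with rfl | hd
    · have huniv : ∀ s : Set (Fin 0 → ℝ), s.Nonempty → s = Set.univ := by
        intro s ⟨x, hx⟩
        exact Set.eq_univ_of_forall fun y => (Subsingleton.elim x y) ▸ hx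
      rw [huniv _ (Set.Nonempty.smul_set ⟨0, zero_mem_Tset 0⟩),
          huniv _ ⟨0, zero_mem_Tset 0⟩, pow_zero, one_mul]
      congr 1
      ext z
      congr 1
      exact Subsingleton.elim _ _
    · haveI : Nonempty (Fin d) := Fin.pos_iff_nonempty.mp hd
      have hzero : ((0:ℝ) • Tset d : Set (Fin d → ℝ)) = {0} := by
        rw [Set.zero_smul_set ⟨0, zero_mem_Tset d⟩]
        rfl
      rw [hzero, show (volume : Measure (Fin d → ℝ)).restrict {0} = 0 from
        Measure.restrict_eq_zero.mpr (measure_singleton 0), integral_zero_measure,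
        zero_pow hd.ne', zero_mul]
  · have hcne : c ≠ 0 := ne_of_gt hcpos
    have h1 : ∫ y in c • Tset d, g y = ∫ y, (c • Tset d).indicator g y :=
      (integral_indicator ((Tset_isClosed d).measurableSet.const_smul₀ c)).symm
    rw [h1]
    have h2 := Measure.integral_comp_smul (volume : Measure (Fin d → ℝ)) ((c • Tset d).indicator g) c
    rw [Module.finrank_fin_fun] at h2
    have h3 : ∀ x, (c • Tset d).indicator g (c • x) = (Tset d).indicator (fun z => g (c • z)) x := by
      intro x
      by_cases hx : x ∈ Tset d
      · rw [Set.indicator_of_mem hx, Set.indicator_of_mem (Set.smul_mem_smul_set hx)]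
      · rw [Set.indicator_of_notMem hx, Set.indicator_of_notMem]
        intro hmem
        exact hx ((Set.smul_mem_smul_set_iff₀ hcne _ _).mp hmem)
    simp only [h3] at h2
    rw [← integral_indicator (Tset_measurable d), h2,
      abs_of_nonneg (show (0:ℝ) ≤ (c^d)⁻¹ by positivity), smul_eq_mul, ← mul_assoc,
      mul_inv_cancel₀ (show (c:ℝ)^d ≠ 0 by positivity), one_mul]

lemma smul_Tset (d : ℕ) {c : ℝ} (hc : 0 ≤ c) :
    c • Tset d = {y : Fin d → ℝ | (∀ i, 0 ≤ y i) ∧ ∑ i, y i ≤ c} := by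
  rcases eq_or_lt_of_le hc with rfl | hcpos
  · ext y
    constructor
    · rintro ⟨z, _, rfl⟩
      simp
    · rintro ⟨h1, h2⟩
      have hy : y = 0 := by
        funext i
        have := (Finset.sum_eq_zero_iff_of_nonneg (fun j _ => h1 j)).mp
          (le_antisymm h2 (Finset.sum_nonneg fun j _ => h1 j)) i (Finset.mem_univ i)
        simpa using this
      exact ⟨0, zero_mem_Tset d, by simp [hy]⟩
  · ext y
    rw [Set.mem_smul_set_iff_inv_smul_mem₀ (ne_of_gt hcpos)]
    simp only [Tset, Set.mem_setOf_eq, Pi.smul_apply, smul_eq_mul, ← Finset.mul_sum]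
    have hcinv : 0 < c⁻¹ := inv_pos.mpr hcpos
    have hcne : c ≠ 0 := ne_of_gt hcpos
    constructor
    · rintro ⟨h1, h2⟩
      refine ⟨fun i => ?_, ?_⟩
      · have hrw : y i = c * (c⁻¹ * y i) := by field_simp
        rw [hrw]; exact mul_nonneg hc (h1 i)
      · have h2' := mul_le_mul_of_nonneg_left h2 hc
        rw [mul_one, ← mul_assoc, mul_inv_cancel₀ hcne, one_mul] at h2'
        exact h2'
    · rintro ⟨h1, h2⟩
      refine ⟨fun i => mul_nonneg (le_of_lt hcinv) (h1 i), ?_⟩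
      have h2' := mul_le_mul_of_nonneg_left h2 (le_of_lt hcinv)
      rw [inv_mul_cancel₀ hcne] at h2'
      exact h2'

lemma snoc_mem_Tset_iff (d : ℕ) (y : Fin d → ℝ) (t : ℝ) :
    (Fin.snoc y t : Fin (d+1) → ℝ) ∈ Tset (d+1)
      ↔ (0 ≤ t ∧ (∀ i, 0 ≤ y i) ∧ ∑ i, y i ≤ 1 - t) := by
  unfold Tset
  simp only [Set.mem_setOf_eq, Fin.sum_univ_castSucc, Fin.snoc_castSucc, Fin.snoc_last]
  constructor
  · rintro ⟨h1, h2⟩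
    exact ⟨by simpa using h1 (Fin.last d),
      fun i => by simpa using h1 i.castSucc, by linarith⟩
  · rintro ⟨h1, h2, h3⟩
    refine ⟨fun i => ?_, by linarith⟩
    induction i using Fin.lastCases with
    | last => simpa using h1
    | cast i => simpa using h2 i

lemma step_lemma (d : ℕ) (F : (Fin (d+1) → ℝ) → ℝ) (hF : Continuous F) :
    ∫ x in Tset (d+1), F x
      = ∫ t in (0:ℝ)..1, (1-t)^d * ∫ z in Tset d, F (Fin.snoc ((1-t) • z) t) := by
  classical
  set e := MeasurableEquiv.piFinSuccAbove (fun _ : Fin (d+1) => ℝ) (Fin.last d) with he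
  have hsymm : ∀ p : ℝ × (Fin d → ℝ), e.symm p = Fin.snoc p.2 p.1 := by
    intro p
    simp only [he, MeasurableEquiv.piFinSuccAbove_symm_apply, Fin.insertNthEquiv_last]
    rfl
  have hcont_esymm : Continuous (fun p : ℝ × (Fin d → ℝ) => e.symm p) := by
    have : (fun p : ℝ × (Fin d → ℝ) => e.symm p)
        = fun p : ℝ × (Fin d → ℝ) => (Fin.snoc p.2 p.1 : Fin (d+1) → ℝ) := funext hsymm
    rw [this]; exact continuous_snocc d
  -- Integrability
  have hsub : (fun p : ℝ × (Fin d → ℝ) => e.symm p) ⁻¹' (Tset (d+1))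
      ⊆ Set.Icc ((0:ℝ), (0 : Fin d → ℝ)) (1, 1) := by
    intro p hp
    rw [Set.mem_preimage, hsymm, snoc_mem_Tset_iff] at hp
    obtain ⟨h1, h2, h3⟩ := hp
    have hsum : (0:ℝ) ≤ ∑ i, p.2 i := Finset.sum_nonneg fun j _ => h2 j
    rw [Set.mem_Icc, Prod.le_def, Prod.le_def]
    refine ⟨⟨h1, fun i => h2 i⟩, ⟨by show p.1 ≤ 1; linarith, fun i => ?_⟩⟩
    have := Finset.single_le_sum (fun j (_ : j ∈ Finset.univ) => h2 j) (Finset.mem_univ i)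
    show p.2 i ≤ 1
    linarith
  have hInt : Integrable (fun p : ℝ × (Fin d → ℝ) => (Tset (d+1)).indicator F (e.symm p))
      ((volume : Measure ℝ).prod (volume : Measure (Fin d → ℝ))) := by
    have heq : (fun p : ℝ × (Fin d → ℝ) => (Tset (d+1)).indicator F (e.symm p))
        = Set.indicator ((fun p : ℝ × (Fin d → ℝ) => e.symm p) ⁻¹' (Tset (d+1)))
            (fun p => F (e.symm p)) := by
      ext p
      exact (Set.indicator_comp_right _).symm
    rw [heq, ← Measure.volume_eq_prod]
    refine (integrable_indicator_iff (hcont_esymm.measurable (Tset_measurable _))).mpr ?_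
    exact ((hF.comp hcont_esymm).continuousOn.integrableOn_compact isCompact_Icc).mono_set hsub
  -- inner integral computation
  have hinner : ∀ t : ℝ,
      (∫ y : Fin d → ℝ, (Tset (d+1)).indicator F (Fin.snoc y t))
        = Set.indicator (Set.Icc (0:ℝ) 1)
            (fun t => (1-t)^d * ∫ z in Tset d, F (Fin.snoc ((1-t) • z) t)) t := by
    intro t
    by_cases ht : t ∈ Set.Icc (0:ℝ) 1
    · rw [Set.indicator_of_mem ht]
      have hts : (0:ℝ) ≤ 1 - t := by linarith [ht.2]
      have h1 : ∀ y : Fin d → ℝ, (Tset (d+1)).indicator F (Fin.snoc y t)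
          = ((1-t) • Tset d).indicator (fun y : Fin d → ℝ => F (Fin.snoc y t)) y := by
        intro y
        rw [smul_Tset d hts]
        simp only [Set.indicator_apply, Set.mem_setOf_eq]
        congr 1
        simp only [eq_iff_iff]
        rw [snoc_mem_Tset_iff]
        constructor
        · rintro ⟨_, h2, h3⟩; exact ⟨h2, h3⟩
        · rintro ⟨h2, h3⟩; exact ⟨ht.1, h2, h3⟩
      simp_rw [h1]
      rw [integral_indicator ((Tset_measurable d).const_smul₀ (1-t))]
      exact scale_integral d hts _
    · rw [Set.indicator_of_notMem ht]
      have hz : ∀ y : Fin d → ℝ, (Tset (d+1)).indicator F (Fin.snoc y t) = 0 := by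
        intro y
        apply Set.indicator_of_notMem
        rw [snoc_mem_Tset_iff]
        rintro ⟨h1, h2, h3⟩
        have hsum : (0:ℝ) ≤ ∑ i, y i := Finset.sum_nonneg fun j _ => h2 j
        exact ht ⟨h1, by linarith⟩
      simp [hz]
  calc ∫ x in Tset (d+1), F x
      = ∫ x, (Tset (d+1)).indicator F x := (integral_indicator (Tset_measurable _)).symm
    _ = ∫ p : ℝ × (Fin d → ℝ), (Tset (d+1)).indicator F (e.symm p) := by
        have hmp := (volume_preserving_piFinSuccAbove
          (fun _ : Fin (d+1) => ℝ) (Fin.last d)).symm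
        exact (hmp.integral_comp' ((Tset (d+1)).indicator F)).symm
    _ = ∫ t : ℝ, ∫ y : Fin d → ℝ, (Tset (d+1)).indicator F (e.symm (t, y)) := by
        rw [Measure.volume_eq_prod]
        exact integral_prod _ hInt
    _ = ∫ t : ℝ, Set.indicator (Set.Icc (0:ℝ) 1)
          (fun t => (1-t)^d * ∫ z in Tset d, F (Fin.snoc ((1-t) • z) t)) t := by
        congr 1
        funext t
        rw [← hinner t]
        congr 1
        funext y
        rw [hsymm]
    _ = ∫ t in Set.Icc (0:ℝ) 1,
          (1-t)^d * ∫ z in Tset d, F (Fin.snoc ((1-t) • z) t) :=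
        integral_indicator measurableSet_Icc
    _ = ∫ t in Set.Ioc (0:ℝ) 1,
          (1-t)^d * ∫ z in Tset d, F (Fin.snoc ((1-t) • z) t) :=
        integral_Icc_eq_integral_Ioc
    _ = ∫ t in (0:ℝ)..1, (1-t)^d * ∫ z in Tset d, F (Fin.snoc ((1-t) • z) t) :=
        (intervalIntegral.integral_of_le zero_le_one).symm

noncomputable def Hc : ℕ → (ℕ → ℝ) → ℝ
  | 0, _ => 1
  | 1, p => p 1
  | 2, p => (p 1 ^ 2 + p 2) / 2
  | 3, p => (p 1 ^ 3 + 3 * p 1 * p 2 + 2 * p 3) / 6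
  | 4, p => (p 1 ^ 4 + 6 * p 1 ^ 2 * p 2 + 3 * p 2 ^ 2 + 8 * p 1 * p 3 + 6 * p 4) / 24
  | _, _ => 0

lemma Hc_pow (k : ℕ) (hk : k ≤ 4) (c : ℝ) : Hc k (fun m => c ^ m) = c ^ k := by
  interval_cases k <;> simp [Hc] <;> ring

lemma Hc_add (k : ℕ) (hk : k ≤ 4) (p : ℕ → ℝ) (t : ℝ) :
    Hc k (fun m => p m + t ^ m) = ∑ j ∈ Finset.range (k+1), t ^ j * Hc (k - j) p := by
  interval_cases k <;>
    simp [Hc, Finset.sum_range_succ] <;> ring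

lemma cont_integrand (d : ℕ) (c : ℝ) (a : Fin d → ℝ) (k : ℕ) :
    Continuous (fun x : Fin d → ℝ => (c * (1 - ∑ i, x i) + ∑ i, a i * x i) ^ k) := by
  apply Continuous.pow
  apply Continuous.add
  · exact continuous_const.mul (continuous_const.sub
      (continuous_finset_sum _ fun i _ => continuous_apply i))
  · exact continuous_finset_sum _ fun i _ => continuous_const.mul (continuous_apply i)

lemma moment_s11 (d : ℕ) : ∀ k, k ≤ 4 → ∀ (c : ℝ) (a : Fin d → ℝ),
    (∫ x in Tset d, (c * (1 - ∑ i, x i) + ∑ i, a i * x i) ^ k)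
      = (Nat.factorial k : ℝ) / (Nat.factorial (d + k))
          * Hc k (fun m => c ^ m + ∑ i, (a i) ^ m) := by
  induction d with
  | zero =>
    intro k hk c a
    have hTuniv : Tset 0 = Set.univ := by
      ext x
      simp [Tset]
    have hconst : ∀ x : Fin 0 → ℝ, (c * (1 - ∑ i, x i) + ∑ i, a i * x i) ^ k = c ^ k := by
      intro x; simp
    rw [hTuniv]
    simp_rw [hconst]
    rw [Measure.restrict_univ, integral_const]
    have hvol : (volume : Measure (Fin 0 → ℝ)) Set.univ = 1 := by
      rw [MeasureTheory.volume_pi, Measure.pi_univ]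
      simp
    rw [measureReal_def, hvol]
    have hp : (fun m => c ^ m + ∑ i : Fin 0, (a i) ^ m) = fun m => c ^ m := by
      funext m; simp
    rw [hp, Hc_pow k hk, Nat.zero_add]
    have : (Nat.factorial k : ℝ) ≠ 0 := by positivity
    simp [div_self this]
  | succ d ih =>
    intro k hk c a
    rw [step_lemma d _ (cont_integrand (d+1) c a k)]
    have hpt : ∀ (t : ℝ) (z : Fin d → ℝ),
        (c * (1 - ∑ i, (Fin.snoc ((1-t) • z) t : Fin (d+1) → ℝ) i)
            + ∑ i, a i * (Fin.snoc ((1-t) • z) t : Fin (d+1) → ℝ) i) ^ k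
        = ∑ j ∈ Finset.range (k+1), (Nat.choose k j : ℝ) * (a (Fin.last d)) ^ j * t ^ j
            * ((1-t) ^ (k - j)
              * (c * (1 - ∑ i, z i) + ∑ i, a i.castSucc * z i) ^ (k - j)) := by
      intro t z
      have hsum1 : ∑ i : Fin (d+1), (Fin.snoc ((1-t) • z) t : Fin (d+1) → ℝ) i
          = (1-t) * ∑ i, z i + t := by
        rw [Fin.sum_univ_castSucc]
        simp [Fin.snoc_castSucc, Fin.snoc_last, Finset.mul_sum]
      have hsum2 : ∑ i : Fin (d+1), a i * (Fin.snoc ((1-t) • z) t : Fin (d+1) → ℝ) i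
          = (1-t) * (∑ i, a i.castSucc * z i) + a (Fin.last d) * t := by
        rw [Fin.sum_univ_castSucc]
        simp only [Fin.snoc_castSucc, Fin.snoc_last, Pi.smul_apply, smul_eq_mul,
          Finset.mul_sum]
        congr 1
        apply Finset.sum_congr rfl
        intro i _
        ring
      rw [hsum1, hsum2]
      have hmain : c * (1 - ((1-t) * ∑ i, z i + t))
            + ((1-t) * (∑ i, a i.castSucc * z i) + a (Fin.last d) * t)
          = a (Fin.last d) * t
            + (1-t) * (c * (1 - ∑ i, z i) + ∑ i, a i.castSucc * z i) := by
        ring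
      rw [hmain, add_pow]
      apply Finset.sum_congr rfl
      intro j hj
      rw [mul_pow, mul_pow]
      ring
    simp_rw [hpt]
    have hIH : ∀ j, j ≤ k →
        (∫ z in Tset d, (c * (1 - ∑ i, z i) + ∑ i, a i.castSucc * z i) ^ (k - j))
          = (Nat.factorial (k-j) : ℝ) / (Nat.factorial (d + (k-j)))
              * Hc (k-j) (fun m => c ^ m + ∑ i : Fin d, a i.castSucc ^ m) := by
      intro j hj
      exact ih (k - j) (le_trans (Nat.sub_le k j) hk) c (fun i => a i.castSucc)
    have hinner : ∀ t : ℝ,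
        (∫ z in Tset d, ∑ j ∈ Finset.range (k+1), (Nat.choose k j : ℝ) * (a (Fin.last d)) ^ j * t ^ j
            * ((1-t) ^ (k - j)
              * (c * (1 - ∑ i, z i) + ∑ i, a i.castSucc * z i) ^ (k - j)))
          = ∑ j ∈ Finset.range (k+1), (Nat.choose k j : ℝ) * (a (Fin.last d)) ^ j * t ^ j
              * ((1-t) ^ (k - j)
                * ((Nat.factorial (k-j) : ℝ) / (Nat.factorial (d + (k-j)))
                  * Hc (k-j) (fun m => c ^ m + ∑ i : Fin d, a i.castSucc ^ m))) := by
      intro t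
      rw [integral_finset_sum]
      · apply Finset.sum_congr rfl
        intro j hj
        rw [integral_const_mul, integral_const_mul,
          hIH j (Nat.lt_succ_iff.mp (Finset.mem_range.mp hj))]
      · intro j hj
        apply ContinuousOn.integrableOn_compact (Tset_isCompact d)
        exact (continuous_const.mul
          (continuous_const.mul (cont_integrand d c (fun i => a i.castSucc) (k-j)))).continuousOn
    simp_rw [hinner]
    have houter : ∀ t : ℝ, (1-t)^d * (∑ j ∈ Finset.range (k+1), (Nat.choose k j : ℝ) * (a (Fin.last d)) ^ j * t ^ j
              * ((1-t) ^ (k - j)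
                * ((Nat.factorial (k-j) : ℝ) / (Nat.factorial (d + (k-j)))
                  * Hc (k-j) (fun m => c ^ m + ∑ i : Fin d, a i.castSucc ^ m))))
        = ∑ j ∈ Finset.range (k+1), ((Nat.choose k j : ℝ) * (a (Fin.last d)) ^ j
              * ((Nat.factorial (k-j) : ℝ) / (Nat.factorial (d + (k-j)))
                  * Hc (k-j) (fun m => c ^ m + ∑ i : Fin d, a i.castSucc ^ m)))
            * (t ^ j * (1-t) ^ (d + (k - j))) := by
      intro t
      rw [Finset.mul_sum]
      apply Finset.sum_congr rfl
      intro j hj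
      rw [show d + (k - j) = (k - j) + d from Nat.add_comm _ _, pow_add]
      ring
    simp_rw [houter]
    rw [intervalIntegral.integral_finset_sum]
    · have hfinal : ∀ j ∈ Finset.range (k+1),
          (∫ t in (0:ℝ)..1, ((Nat.choose k j : ℝ) * (a (Fin.last d)) ^ j
              * ((Nat.factorial (k-j) : ℝ) / (Nat.factorial (d + (k-j)))
                  * Hc (k-j) (fun m => c ^ m + ∑ i : Fin d, a i.castSucc ^ m)))
            * (t ^ j * (1-t) ^ (d + (k - j))))
          = (Nat.factorial k : ℝ) / (Nat.factorial (d + 1 + k))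
              * ((a (Fin.last d)) ^ j * Hc (k-j) (fun m => c ^ m + ∑ i : Fin d, a i.castSucc ^ m)) := by
        intro j hj
        have hjk : j ≤ k := Nat.lt_succ_iff.mp (Finset.mem_range.mp hj)
        rw [intervalIntegral.integral_const_mul, beta_nat j (d + (k - j))]
        have hidx : j + (d + (k - j)) + 1 = d + 1 + k := by omega
        rw [hidx]
        have hcf : (Nat.choose k j * Nat.factorial j * Nat.factorial (k - j) : ℝ)
            = Nat.factorial k := by
          exact_mod_cast congrArg (Nat.cast : ℕ → ℝ)
            (Nat.choose_mul_factorial_mul_factorial hjk)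
        have h1 : (Nat.factorial (d + (k-j)) : ℝ) ≠ 0 := by positivity
        have h2 : (Nat.factorial (d + 1 + k) : ℝ) ≠ 0 := by positivity
        field_simp
        linear_combination (a (Fin.last d) ^ j
          * Hc (k - j) (fun m => c ^ m + ∑ i : Fin d, a i.castSucc ^ m)) * hcf
      rw [Finset.sum_congr rfl hfinal, ← Finset.mul_sum]
      have hpE : (fun m => c ^ m + ∑ i : Fin (d+1), (a i) ^ m)
          = fun m => (c ^ m + ∑ i : Fin d, (a i.castSucc) ^ m) + (a (Fin.last d)) ^ m := by
        funext m
        rw [Fin.sum_univ_castSucc]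
        ring
      rw [hpE, Hc_add k hk]
    · intro j hj
      apply Continuous.intervalIntegrable
      exact continuous_const.mul ((continuous_pow j).mul
        ((continuous_const.sub continuous_id).pow _))

/-- The simplex region inside Euclidean space. -/
def TE (d : ℕ) : Set (EuclideanSpace ℝ (Fin d)) := {x | (∀ i, 0 ≤ x i) ∧ ∑ i, x i ≤ 1}

lemma TE_eq_preimage (d : ℕ) :
    TE d = (MeasurableEquiv.toLp 2 (Fin d → ℝ)).symm ⁻¹' (Tset d) := rfl

lemma TE_measurable (d : ℕ) : MeasurableSet (TE d) := by
  rw [TE_eq_preimage]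
  exact (MeasurableEquiv.toLp 2 (Fin d → ℝ)).symm.measurable (Tset_measurable d)

lemma TE_image (d : ℕ) :
    (MeasurableEquiv.toLp 2 (Fin d → ℝ)).symm.symm '' (Tset d) = TE d := by
  rw [TE_eq_preimage, MeasurableEquiv.image_eq_preimage_symm]
  rfl

lemma momentE (d : ℕ) (k : ℕ) (hk : k ≤ 4) (c : ℝ) (a : Fin d → ℝ) :
    (∫ x in TE d, (c * (1 - ∑ i, x i) + ∑ i, a i * x i) ^ k)
      = (Nat.factorial k : ℝ) / (Nat.factorial (d + k))
          * Hc k (fun m => c ^ m + ∑ i, (a i) ^ m) := by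
  rw [← TE_image d]
  rw [MeasurePreserving.setIntegral_image_emb
    (MeasurePreserving.symm _ (EuclideanSpace.volume_preserving_symm_measurableEquiv_toLp (Fin d)))
    (MeasurableEquiv.toLp 2 (Fin d → ℝ)).symm.symm.measurableEmbedding _ _]
  exact moment_s11 d k hk c a

theorem integral_linear_fourth_over_simplex (n : ℕ) (hn : 1 ≤ n)
    (v : Fin n → EuclideanSpace ℝ (Fin (n - 1))) (hv : AffineIndependent ℝ v)
    (ℓ : EuclideanSpace ℝ (Fin (n - 1)) →ₗ[ℝ] ℝ) (h0 : ∑ i, ℓ (v i) = 0) :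
    (∫ x in convexHull ℝ (Set.range v), (ℓ x) ^ 4)
      = ((volume (convexHull ℝ (Set.range v))).toReal / (n * (n + 1) * (n + 2) * (n + 3)))
          * (6 * ∑ i, (ℓ (v i)) ^ 4 + 3 * (∑ i, (ℓ (v i)) ^ 2) ^ 2) := by
  obtain ⟨d, rfl⟩ : ∃ d, n = d + 1 := ⟨n - 1, (Nat.succ_pred_eq_of_pos hn).symm⟩
  clear hn
  let v' : Fin (d+1) → EuclideanSpace ℝ (Fin d) := v
  let ℓ' : EuclideanSpace ℝ (Fin d) →ₗ[ℝ] ℝ := ℓ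
  have hv' : AffineIndependent ℝ v' := hv
  have h0' : ∑ i, ℓ' (v' i) = 0 := h0
  show (∫ x in convexHull ℝ (Set.range v'), (ℓ' x) ^ 4)
      = ((volume (convexHull ℝ (Set.range v'))).toReal
          / (((d+1 : ℕ) : ℝ) * (((d+1 : ℕ) : ℝ) + 1) * (((d+1 : ℕ) : ℝ) + 2)
            * (((d+1 : ℕ) : ℝ) + 3)))
        * (6 * ∑ i, (ℓ' (v' i)) ^ 4 + 3 * (∑ i, (ℓ' (v' i)) ^ 2) ^ 2)
  clear_value v' ℓ'
  clear hv h0 v ℓ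
  set c0 : ℝ := ℓ' (v' (Fin.last d)) with hc0
  set a0 : Fin d → ℝ := fun i => ℓ' (v' i.castSucc) with ha0
  set u : Fin d → EuclideanSpace ℝ (Fin d) := fun i => v' i.castSucc - v' (Fin.last d) with hu
  let Amap : EuclideanSpace ℝ (Fin d) →ₗ[ℝ] EuclideanSpace ℝ (Fin d) :=
    { toFun := fun x => ∑ i, x i • u i
      map_add' := by
        intro x y
        simp [add_smul, Finset.sum_add_distrib]
      map_smul' := by
        intro r x
        simp [smul_smul, Finset.smul_sum] }
  let Ac : EuclideanSpace ℝ (Fin d) →L[ℝ] EuclideanSpace ℝ (Fin d) :=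
    Amap.toContinuousLinearMap
  set φ : EuclideanSpace ℝ (Fin d) → EuclideanSpace ℝ (Fin d) :=
    fun x => Amap x + v' (Fin.last d) with hφ
  have hval : ∀ x : EuclideanSpace ℝ (Fin d),
      ℓ' (φ x) = c0 * (1 - ∑ i, x i) + ∑ i, a0 i * x i := by
    intro x
    have h1 : ℓ' (Amap x) = ∑ i, x i * (a0 i - c0) := by
      show ℓ' (∑ i, x i • u i) = _
      rw [map_sum]
      apply Finset.sum_congr rfl
      intro i _
      rw [LinearMap.map_smul, smul_eq_mul]
      congr 1
      rw [hu]
      simp [map_sub, ha0, hc0]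
    have h2 : ∑ i, x i * (a0 i - c0) = (∑ i, a0 i * x i) - (∑ i, x i) * c0 := by
      calc ∑ i, x i * (a0 i - c0) = ∑ i, (a0 i * x i - x i * c0) :=
            Finset.sum_congr rfl fun i _ => by ring
      _ = (∑ i, a0 i * x i) - ∑ i, x i * c0 := Finset.sum_sub_distrib _ _
      _ = _ := by rw [← Finset.sum_mul]
    calc ℓ' (φ x) = ℓ' (Amap x) + c0 := by
          show ℓ' (Amap x + v' (Fin.last d)) = _
          rw [map_add]
    _ = (∑ i, a0 i * x i) - (∑ i, x i) * c0 + c0 := by rw [h1, h2]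
    _ = c0 * (1 - ∑ i, x i) + ∑ i, a0 i * x i := by ring
  have hli : LinearIndependent ℝ u := by
    have h := (affineIndependent_iff_linearIndependent_vsub ℝ v' (Fin.last d)).mp hv'
    have hemb : Function.Injective
        (fun i : Fin d => (⟨i.castSucc, (Fin.castSucc_lt_last i).ne⟩
          : {x : Fin (d+1) // x ≠ Fin.last d})) := by
      intro i j hij
      exact Fin.castSucc_injective d (congrArg Subtype.val hij)
    have h2 := h.comp _ hemb
    exact h2
  have hAinj : Function.Injective (Amap : EuclideanSpace ℝ (Fin d) → EuclideanSpace ℝ (Fin d)) := by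
    intro x y hxy
    have hzz : Amap (x - y) = 0 := by rw [map_sub, hxy, sub_self]
    have hcoef := Fintype.linearIndependent_iff.mp hli (fun i => (x - y) i) hzz
    have hsub : x - y = 0 := by
      ext i
      exact hcoef i
    rw [← sub_eq_zero]
    exact hsub
  have hφinj : Set.InjOn φ (TE d) := by
    intro x _ y _ hxy
    apply hAinj
    have := hxy
    rw [hφ] at this
    exact add_right_cancel this
  have hderiv : ∀ x ∈ TE d, HasFDerivWithinAt φ Ac (TE d) x := by
    intro x _
    exact ((Ac.hasFDerivAt).add_const (v' (Fin.last d))).hasFDerivWithinAt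
  have hCoV : ∀ g : EuclideanSpace ℝ (Fin d) → ℝ,
      ∫ x in φ '' TE d, g x = |Ac.det| * ∫ x in TE d, g (φ x) := by
    intro g
    rw [integral_image_eq_integral_abs_det_fderiv_smul volume (TE_measurable d)
      (fun x hx => hderiv x hx) hφinj g]
    simp_rw [smul_eq_mul]
    exact integral_const_mul _ _
  have hTEconvex : Convex ℝ (TE d) := by
    intro x hx y hy s t hs ht hst
    constructor
    · intro i
      have h1 := hx.1 i
      have h2 := hy.1 i
      simp only [PiLp.add_apply, PiLp.smul_apply, smul_eq_mul]
      exact add_nonneg (mul_nonneg hs h1) (mul_nonneg ht h2)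
    · simp only [PiLp.add_apply, PiLp.smul_apply, smul_eq_mul, Finset.sum_add_distrib,
        ← Finset.mul_sum]
      have h3 := mul_le_mul_of_nonneg_left hx.2 hs
      have h4 := mul_le_mul_of_nonneg_left hy.2 ht
      linarith
  have himg : φ '' TE d = convexHull ℝ (Set.range v') := by
    apply Set.Subset.antisymm
    · rintro _ ⟨x, hx, rfl⟩
      set w : Fin (d+1) → ℝ := Fin.snoc (fun i => x i) (1 - ∑ i, x i) with hw
      have hw0 : ∀ i ∈ Finset.univ, 0 ≤ w i := by
        intro i _
        induction i using Fin.lastCases with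
        | last =>
          rw [hw]
          simp only [Fin.snoc_last]
          linarith [hx.2]
        | cast i =>
          rw [hw]
          simp only [Fin.snoc_castSucc]
          exact hx.1 i
      have hw1 : ∑ i, w i = 1 := by
        rw [Fin.sum_univ_castSucc]
        simp [hw, Fin.snoc_castSucc, Fin.snoc_last]
      have hφw : φ x = ∑ i, w i • v' i := by
        rw [Fin.sum_univ_castSucc]
        simp only [hw, Fin.snoc_castSucc, Fin.snoc_last]
        show (∑ i, x i • u i) + v' (Fin.last d) = _
        simp only [hu, smul_sub]
        rw [Finset.sum_sub_distrib, ← Finset.sum_smul, sub_smul, one_smul]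
        abel
      rw [hφw, ← Finset.centerMass_eq_of_sum_1 _ v' hw1]
      exact Finset.centerMass_mem_convexHull _ hw0 (by rw [hw1]; norm_num)
        (fun i _ => Set.mem_range_self i)
    · apply convexHull_min
      · rintro _ ⟨i, rfl⟩
        induction i using Fin.lastCases with
        | last =>
          refine ⟨0, ⟨fun i => by simp, by simp⟩, ?_⟩
          rw [hφ]
          simp only [map_zero, zero_add]
        | cast i =>
          refine ⟨EuclideanSpace.single i 1, ⟨fun j => ?_, ?_⟩, ?_⟩
          · rw [EuclideanSpace.single_apply]
            split_ifs <;> norm_num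
          · simp [EuclideanSpace.single_apply]
          · show Amap (EuclideanSpace.single i 1) + v' (Fin.last d) = v' i.castSucc
            have hA1 : Amap (EuclideanSpace.single i 1) = u i := by
              show ∑ j, (EuclideanSpace.single i (1:ℝ)) j • u j = u i
              rw [Finset.sum_eq_single i]
              · simp [EuclideanSpace.single_apply]
              · intro j _ hji
                rw [EuclideanSpace.single_apply]
                simp [hji]
              · intro hi
                exact absurd (Finset.mem_univ i) hi
            rw [hA1, hu]
            simp
      · have himgeq : φ '' TE d
            = (fun z => v' (Fin.last d) + z) '' ((Amap : EuclideanSpace ℝ (Fin d) →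
                EuclideanSpace ℝ (Fin d)) '' TE d) := by
          rw [Set.image_image]
          apply Set.image_congr
          intro x _
          rw [hφ]
          exact add_comm _ _
        rw [himgeq]
        exact (hTEconvex.linear_image Amap).translate _
  -- volume relations
  have hv1 : (volume (convexHull ℝ (Set.range v'))).toReal
      = |Ac.det| * (volume (TE d)).toReal := by
    have h1 := hCoV (fun _ => (1:ℝ))
    rw [himg] at h1
    simpa [setIntegral_const, measureReal_def] using h1
  have hTEvol : (volume (TE d)).toReal = 1 / Nat.factorial d := by
    have h2 := momentE d 0 (by norm_num) 0 (fun _ => 0)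
    simp only [pow_zero, Nat.add_zero, Nat.factorial_zero, Nat.cast_one, Hc] at h2
    rw [setIntegral_const] at h2
    simpa [measureReal_def] using h2
  -- LHS
  have hLHS : (∫ x in convexHull ℝ (Set.range v'), (ℓ' x) ^ 4)
      = |Ac.det| * ((Nat.factorial 4 : ℝ) / (Nat.factorial (d + 4))
          * Hc 4 (fun m => c0 ^ m + ∑ i, a0 i ^ m)) := by
    rw [← himg, hCoV]
    congr 1
    simp_rw [hval]
    exact momentE d 4 (le_refl 4) c0 a0
  have hPm : ∀ m : ℕ, c0 ^ m + ∑ i, a0 i ^ m = ∑ i : Fin (d+1), ℓ' (v' i) ^ m := by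
    intro m
    rw [Fin.sum_univ_castSucc]
    rw [hc0, ha0]
    ring
  have hp1 : c0 ^ 1 + ∑ i, a0 i ^ 1 = 0 := by
    rw [hPm 1]
    simpa using h0'
  have hHc : Hc 4 (fun m => c0 ^ m + ∑ i, a0 i ^ m)
      = (3 * (∑ i : Fin (d+1), ℓ' (v' i) ^ 2) ^ 2 + 6 * ∑ i : Fin (d+1), ℓ' (v' i) ^ 4) / 24 := by
    show ((c0 ^ 1 + ∑ i, a0 i ^ 1) ^ 4 + 6 * (c0 ^ 1 + ∑ i, a0 i ^ 1) ^ 2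
        * (c0 ^ 2 + ∑ i, a0 i ^ 2) + 3 * (c0 ^ 2 + ∑ i, a0 i ^ 2) ^ 2
        + 8 * (c0 ^ 1 + ∑ i, a0 i ^ 1) * (c0 ^ 3 + ∑ i, a0 i ^ 3)
        + 6 * (c0 ^ 4 + ∑ i, a0 i ^ 4)) / 24 = _
    rw [hp1, hPm 2, hPm 4]
    ring
  rw [hLHS, hHc, hv1, hTEvol]
  have hfact : (Nat.factorial (d+4) : ℝ)
      = (Nat.factorial d : ℝ) * ((d+1) * (d+2) * (d+3) * (d+4)) := by
    rw [show (d+4) = (d+3)+1 from rfl, Nat.factorial_succ,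
      show (d+3) = (d+2)+1 from rfl, Nat.factorial_succ,
      show (d+2) = (d+1)+1 from rfl, Nat.factorial_succ, Nat.factorial_succ]
    push_cast
    ring
  rw [hfact]
  have h1 : (Nat.factorial d : ℝ) ≠ 0 := by positivity
  have h2 : ((d:ℝ)+1) ≠ 0 := by positivity
  have h3 : ((d:ℝ)+2) ≠ 0 := by positivity
  have h4 : ((d:ℝ)+3) ≠ 0 := by positivity
  have h5 : ((d:ℝ)+4) ≠ 0 := by positivity
  have hfac4 : (Nat.factorial 4 : ℝ) = 24 := by norm_num [Nat.factorial]
  rw [hfac4]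
  push_cast
  field_simp
  ring
end
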